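/- Define f mapping functions C : ℕ → ℕ to functions ℕ → ℕ by f(C)(0) = C(0) mod 2 and f(C)(i+1) = C(i+1) mod 2 + ⌊C(i)/2⌋. Suppose C has finite support and Σ_{i} C(i)·2^i = S with S ≥ 1. Then Σ_{i} f(C)(i)·2^i = S (the weighted sum is invariant under f), and for k = ⌊log₂ S⌋ + 1, the k-fold iterate satisfies f^[k](C)(j) ≤ 1 for every j ∈ ℕ. -/
import Mathlib


/-- One round of the consolidation step of a Fibonacci heap's delete-min: `C i` is the
number of trees of rank `i` on the root list; in each round the trees of each rank are
paired up and each pair merges into a tree of the next rank, leaving at most one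
leftover tree. -/
def consolidate (C : ℕ → ℕ) : ℕ → ℕ
  | 0 => C 0 % 2
  | (i + 1) => C (i + 1) % 2 + C i / 2

lemma consolidate_sum (C : ℕ → ℕ) :
    ∀ n, (∑ i ∈ Finset.range (n + 1), consolidate C i * 2 ^ i) + (C n / 2) * 2 ^ (n + 1)
      = ∑ i ∈ Finset.range (n + 1), C i * 2 ^ i := by
  intro n
  induction n with
  | zero =>
    simp [consolidate]
    omega
  | succ n ih =>
    rw [Finset.sum_range_succ, Finset.sum_range_succ (fun i => C i * 2 ^ i), ← ih]
    show _ + (C (n+1) % 2 + C n / 2) * 2 ^ (n+1) + _ = _ + _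
    conv_rhs => rw [← Nat.mod_add_div (C (n+1)) 2]
    ring

lemma consolidate_vanish (C : ℕ → ℕ) (N : ℕ) (h : ∀ i, N ≤ i → C i = 0) :
    ∀ i, N + 1 ≤ i → consolidate C i = 0 := by
  intro i hi
  match i, hi with
  | (j + 1), hi =>
    simp [consolidate, h (j + 1) (by omega), h j (by omega)]

lemma consolidate_weight (C : ℕ → ℕ) (N : ℕ) (h : ∀ i, N ≤ i → C i = 0) :
    ∑ᶠ i, consolidate C i * 2 ^ i = ∑ᶠ i, C i * 2 ^ i := by
  have h1 : Function.support (fun i => C i * 2 ^ i) ⊆ (Finset.range (N + 1) : Finset ℕ) := by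
    intro i hi
    simp only [Function.mem_support] at hi
    simp only [Finset.coe_range, Set.mem_Iio]
    by_contra hic
    exact hi (by rw [h i (by omega)]; ring)
  have h2 : Function.support (fun i => consolidate C i * 2 ^ i)
      ⊆ (Finset.range (N + 1) : Finset ℕ) := by
    intro i hi
    simp only [Function.mem_support] at hi
    simp only [Finset.coe_range, Set.mem_Iio]
    by_contra hic
    exact hi (by rw [consolidate_vanish C N h i (by omega)]; ring)
  rw [finsum_eq_sum_of_support_subset _ h1, finsum_eq_sum_of_support_subset _ h2]
  have := consolidate_sum C N
  rw [h N le_rfl] at this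
  simpa using this

/-- After `k` rounds, ranks below `k` have at most one tree. -/
lemma consolidate_small (C : ℕ → ℕ) : ∀ k j, j < k → consolidate^[k] C j ≤ 1 := by
  intro k
  induction k with
  | zero => omega
  | succ k ih =>
    intro j hj
    rw [Function.iterate_succ_apply']
    set D := consolidate^[k] C with hD
    match j with
    | 0 =>
      show D 0 % 2 ≤ 1
      omega
    | (i + 1) =>
      show D (i + 1) % 2 + D i / 2 ≤ 1
      have h1 : D i ≤ 1 := ih i (by omega)
      have h2 : D (i + 1) % 2 ≤ 1 := by omega
      have h3 : D i / 2 = 0 := Nat.div_eq_of_lt (by omega)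
      omega

/-- If `C` has finite support and invariant weight `Σ_i C(i)·2^i = S ≥ 1`, then the
weight is preserved by one round of consolidation, and after `⌊log₂ S⌋ + 1` rounds every
rank group contains at most one tree. -/
theorem consolidate_weight_invariant_and_rounds (C : ℕ → ℕ) (S : ℕ)
    (hfin : (Function.support C).Finite) (hS1 : 1 ≤ S)
    (hS : ∑ᶠ i, C i * 2 ^ i = S) :
    (∑ᶠ i, consolidate C i * 2 ^ i = S) ∧
    ∀ j, consolidate^[Nat.log 2 S + 1] C j ≤ 1 := by
  obtain ⟨N, hN⟩ := hfin.bddAbove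
  have hC : ∀ i, N + 1 ≤ i → C i = 0 := by
    intro i hi
    by_contra h
    have : i ∈ Function.support C := h
    have := hN this
    omega
  have key : ∀ k, (∀ i, N + 1 + k ≤ i → consolidate^[k] C i = 0) ∧
      (∑ᶠ i, consolidate^[k] C i * 2 ^ i = S) := by
    intro k
    induction k with
    | zero => exact ⟨fun i hi => hC i (by omega), by simpa using hS⟩
    | succ k ih =>
      rw [Function.iterate_succ_apply']
      refine ⟨fun i hi => consolidate_vanish _ _ ih.1 i (by omega), ?_⟩
      rw [consolidate_weight _ (N + 1 + k) ih.1]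
      exact ih.2
  refine ⟨by rw [consolidate_weight _ (N + 1) hC]; exact hS, ?_⟩
  intro j
  by_contra hcon
  push_neg at hcon
  set K := Nat.log 2 S + 1 with hK
  have h2 : 2 ≤ consolidate^[K] C j := hcon
  -- j ≥ K
  have hjK : K ≤ j := by
    by_contra h
    have := consolidate_small C K j (by omega)
    omega
  -- single term bound
  have hsupp : (Function.support (fun i => consolidate^[K] C i * 2 ^ i)).Finite := by
    apply Set.Finite.subset (Finset.range (N + 1 + K) : Finset ℕ).finite_toSet
    intro i hi
    simp only [Function.mem_support] at hi
    simp only [Finset.coe_range, Set.mem_Iio]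
    by_contra hic
    exact hi (by rw [(key K).1 i (by omega)]; ring)
  have hle : consolidate^[K] C j * 2 ^ j ≤ S := by
    rw [← (key K).2]
    exact single_le_finsum j hsupp (fun _ => Nat.zero_le _)
  have hlt : S < 2 ^ K := Nat.lt_pow_succ_log_self (by norm_num) S
  have hKj : (2 : ℕ) ^ K ≤ 2 ^ j := Nat.pow_le_pow_right (by norm_num) hjK
  have : 2 ^ j ≤ consolidate^[K] C j * 2 ^ j := Nat.le_mul_of_pos_left _ (by omega)
  omega
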